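/- Let A be a C*-algebra and F a set of representations. F is exhaustive for A if and only if the family F_n := {φ ⊗ 1 : φ ∈ F} of representations of M_n(A) is exhaustive for M_n(A). -/

import Mathlib

set_option synthInstance.maxHeartbeats 400000
set_option maxHeartbeats 1000000
set_option linter.unusedSectionVars false

open Matrix

/-- The `L²` product of finitely many complete spaces is complete (its uniformity is
definitionally the product uniformity). -/
instance piLp_completeSpace {n : ℕ} (G : Fin n → Type)
    [∀ j, NormedAddCommGroup (G j)] [∀ j, CompleteSpace (G j)] :
    CompleteSpace (PiLp 2 G) :=
  inferInstance

/-- A primitive ideal of `A`: the kernel of a (topologically) irreducible representation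
of `A` on a nonzero Hilbert space. -/
def IsPrimitiveIdeal (A : Type) [NonUnitalRing A] [Module ℂ A] [Star A] (P : Set A) : Prop :=
  ∃ (H : Type) (_ : NormedAddCommGroup H) (_ : InnerProductSpace ℂ H) (_ : CompleteSpace H)
    (π : A →⋆ₙₐ[ℂ] (H →L[ℂ] H)),
    Nontrivial H ∧ (∀ ξ : H, ξ ≠ 0 → Dense (Set.range fun a : A => π a ξ)) ∧
    P = {a : A | π a = 0}

namespace ExhAux

variable {A : Type} [NonUnitalCStarAlgebra A]

/-- star of a standard basis matrix. -/
lemma star_stdBasisMatrix {n : ℕ} (j k : Fin n) (a : A) :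
    star (Matrix.single j k a) = Matrix.single k j (star a) := by
  ext p q
  simp only [Matrix.star_apply, Matrix.single, Matrix.of_apply]
  by_cases h1 : k = p <;> by_cases h2 : j = q <;> simp [h1, h2, and_comm]

lemma row_mul_std {n : ℕ} (z : Fin n) (R : Matrix (Fin n) (Fin n) A)
    (hR : ∀ p q, p ≠ z → R p q = 0) (l : Fin n) (c : A) :
    R * Matrix.single z l c = Matrix.single z l (R z z * c) := by
  ext p q
  simp only [Matrix.mul_apply, Matrix.single, Matrix.of_apply, mul_ite, mul_zero]
  by_cases hq : l = q
  · subst hq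
    simp only [and_true]
    rw [Finset.sum_ite_eq (Finset.univ) z (fun t => R p t * c)]
    simp only [Finset.mem_univ, if_true]
    by_cases hp : z = p
    · subst hp; simp
    · rw [hR p z (fun h => hp h.symm)]
      simp [hp]
  · simp [hq]

lemma mul_std_eq_sum {n : ℕ} (M : Matrix (Fin n) (Fin n) A) (j k : Fin n) (c : A) :
    M * Matrix.single j k c = ∑ i, Matrix.single i k (M i j * c) := by
  ext p q
  rw [Matrix.sum_apply]
  simp only [Matrix.mul_apply, Matrix.single, Matrix.of_apply, mul_ite, mul_zero]
  by_cases hq : k = q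
  · simp [hq, Finset.sum_ite_eq, Finset.sum_ite_eq']
  · simp [hq]



/-- Restriction of a continuous linear map to an invariant submodule. -/
def restrictCLM {K : Type} [NormedAddCommGroup K] [NormedSpace ℂ K]
    (L : Submodule ℂ K) (T : K →L[ℂ] K) (h : ∀ x ∈ L, T x ∈ L) : L →L[ℂ] L where
  toFun x := ⟨T x, h x x.2⟩
  map_add' x y := by ext; simp
  map_smul' c x := by ext; simp
  cont := Continuous.subtype_mk (T.continuous.comp continuous_subtype_val) _

@[simp] lemma restrictCLM_apply {K : Type} [NormedAddCommGroup K] [NormedSpace ℂ K]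
    (L : Submodule ℂ K) (T : K →L[ℂ] K) (h) (x : L) :
    (restrictCLM L T h x : K) = T x := rfl

variable {K : Type} [NormedAddCommGroup K] [InnerProductSpace ℂ K] [CompleteSpace K]

/-- Two continuous linear maps agreeing on a set agree on the closure of its span. -/
lemma eqOn_closure_span {G : Set K} {f g : K →L[ℂ] K} (h : ∀ x ∈ G, f x = g x) :
    ∀ x ∈ (Submodule.span ℂ G).topologicalClosure, f x = g x := by
  intro x hx
  have hle : (Submodule.span ℂ G).topologicalClosure ≤ LinearMap.ker ((f - g : K →L[ℂ] K) : K →ₗ[ℂ] K) :=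
    Submodule.topologicalClosure_minimal _
      (Submodule.span_le.mpr fun y hy => by
        simp [LinearMap.mem_ker, ContinuousLinearMap.sub_apply, sub_eq_zero, h y hy])
      (ContinuousLinearMap.isClosed_ker (f - g))
  have := hle hx
  rw [LinearMap.mem_ker] at this
  exact sub_eq_zero.mp this

lemma mapsTo_closure_span {G : Set K} {T : K →L[ℂ] K}
    (h : ∀ x ∈ G, T x ∈ Submodule.span ℂ G) :
    ∀ x ∈ (Submodule.span ℂ G).topologicalClosure, T x ∈ (Submodule.span ℂ G).topologicalClosure := by
  intro x hx
  have hx' : x ∈ closure (Submodule.span ℂ G : Set K) := hx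
  have hmap : Submodule.map (T : K →ₗ[ℂ] K) (Submodule.span ℂ G) ≤ Submodule.span ℂ G := by
    rw [Submodule.map_span]
    exact Submodule.span_le.mpr (by rintro _ ⟨y, hy, rfl⟩; exact h y hy)
  have h1 : T '' (Submodule.span ℂ G : Set K) ⊆ (Submodule.span ℂ G : Set K) := by
    rintro _ ⟨y, hy, rfl⟩
    exact hmap ⟨y, hy, rfl⟩
  have : T x ∈ closure (T '' (Submodule.span ℂ G : Set K)) :=
    image_closure_subset_closure_image T.continuous ⟨x, hx', rfl⟩
  exact closure_mono h1 this



section Rep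

variable {n : ℕ} {K : Type} [NormedAddCommGroup K] [InnerProductSpace ℂ K] [CompleteSpace K]
  (ρ : Matrix (Fin n) (Fin n) A →⋆ₙₐ[ℂ] (K →L[ℂ] K)) (z : Fin n)

/-- The set of vectors generated by the `z`-th row of matrix units. -/
def Gset : Set K := {x | ∃ k c w, x = ρ (Matrix.single z k c) w}

/-- The closed subspace generated by `Gset`. -/
def Lsub : Submodule ℂ K := (Submodule.span ℂ (Gset ρ z)).topologicalClosure

instance : CompleteSpace (Lsub ρ z) :=
  (Submodule.isClosed_topologicalClosure _).completeSpace_coe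

lemma Gset_subset_Lsub : Gset ρ z ⊆ (Lsub ρ z : Set K) :=
  fun _ hx => (Submodule.le_topologicalClosure _) (Submodule.subset_span hx)

lemma sigma_maps (a : A) : ∀ x ∈ Lsub ρ z, ρ (Matrix.single z z a) x ∈ Lsub ρ z := by
  apply mapsTo_closure_span
  rintro x ⟨k, c, w, rfl⟩
  refine Submodule.subset_span ⟨k, a * c, w, ?_⟩
  have h : Matrix.single z k (a * c) = Matrix.single z z a * Matrix.single z k c := by
    rw [Matrix.single_mul_single_same]
  rw [h, _root_.map_mul, ContinuousLinearMap.mul_apply]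

/-- The representation of `A` on `Lsub` given by `a ↦ ρ (E z z a)` restricted. -/
noncomputable def sigmaL : A →⋆ₙₐ[ℂ] (Lsub ρ z →L[ℂ] Lsub ρ z) where
  toFun a := restrictCLM _ (ρ (Matrix.single z z a)) (sigma_maps ρ z a)
  map_zero' := by
    ext x
    simp [Matrix.single_zero]
  map_add' a b := by
    ext x
    simp [Matrix.single_add, map_add]
  map_smul' c a := by
    ext x
    simp [← Matrix.smul_single, _root_.map_smul]
  map_mul' a b := by
    ext x
    simp only [ContinuousLinearMap.mul_apply, restrictCLM_apply]
    have h : Matrix.single z z (a * b) = Matrix.single z z a * Matrix.single z z b := by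
      rw [Matrix.single_mul_single_same]
    rw [h, _root_.map_mul, ContinuousLinearMap.mul_apply]
  map_star' a := by
    rw [ContinuousLinearMap.star_eq_adjoint]
    rw [ContinuousLinearMap.eq_adjoint_iff]
    intro x y
    rw [Submodule.coe_inner, Submodule.coe_inner, restrictCLM_apply, restrictCLM_apply]
    rw [← star_stdBasisMatrix, map_star, ContinuousLinearMap.star_eq_adjoint,
      ContinuousLinearMap.adjoint_inner_left]

lemma sigmaL_apply (a : A) (x : Lsub ρ z) :
    (sigmaL ρ z a x : K) = ρ (Matrix.single z z a) x := rfl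

end Rep

section Rep2

variable {n : ℕ} {K : Type} [NormedAddCommGroup K] [InnerProductSpace ℂ K] [CompleteSpace K]
  (ρ : Matrix (Fin n) (Fin n) A →⋆ₙₐ[ℂ] (K →L[ℂ] K)) (z : Fin n)

lemma exists_Gset_ne_zero (hK : Nontrivial K)
    (hirr : ∀ ξ : K, ξ ≠ 0 → Dense (Set.range fun M => ρ M ξ)) :
    ∃ x ∈ Gset ρ z, x ≠ 0 := by
  obtain ⟨ξ, hξ⟩ := exists_ne (0 : K)
  have h1 : ∃ M, ρ M ξ ≠ 0 := by
    by_contra h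
    push_neg at h
    have hsub : Set.range (fun M => ρ M ξ) ⊆ {0} := by rintro _ ⟨M, rfl⟩; simp [h M]
    have hd : Dense ({0} : Set K) := (hirr ξ hξ).mono hsub
    have h2 : closure ({0} : Set K) = Set.univ := hd.closure_eq
    rw [closure_singleton] at h2
    obtain ⟨y, hy⟩ := exists_ne (0 : K)
    have : y ∈ ({0} : Set K) := by rw [h2]; trivial
    exact hy this
  obtain ⟨M, hM⟩ := h1
  have hsum : ρ M ξ = ∑ p, ∑ q, ρ (Matrix.single p q (M p q)) ξ := by
    nth_rewrite 1 [Matrix.matrix_eq_sum_single M]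
    rw [map_sum, ContinuousLinearMap.sum_apply]
    refine Finset.sum_congr rfl fun p _ => ?_
    rw [map_sum, ContinuousLinearMap.sum_apply]
  have hex : ∃ p q, ρ (Matrix.single p q (M p q)) ξ ≠ 0 := by
    by_contra h
    push_neg at h
    exact hM (by rw [hsum]; exact Finset.sum_eq_zero fun p _ =>
      Finset.sum_eq_zero fun q _ => h p q)
  obtain ⟨p, q, hpq⟩ := hex
  set a := M p q with ha
  have hX : ρ (Matrix.single p q a) ≠ 0 := fun h => hpq (by rw [h]; rfl)
  have hZ : ρ (Matrix.single q q (star a * a)) ≠ 0 := by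
    intro h
    apply hX
    have h3 : star (ρ (Matrix.single p q a)) * ρ (Matrix.single p q a) = 0 := by
      rw [← map_star, star_stdBasisMatrix, ← _root_.map_mul, Matrix.single_mul_single_same]
      exact h
    exact (CStarRing.star_mul_self_eq_zero_iff _).mp h3
  set b := star a * a with hb
  have hY : ρ (Matrix.single z q b) ≠ 0 := by
    intro h
    apply hZ
    have h2 : star (ρ (Matrix.single q q b)) * ρ (Matrix.single q q b)
        = star (ρ (Matrix.single z q b)) * ρ (Matrix.single z q b) := by
      rw [← map_star, ← map_star, star_stdBasisMatrix, star_stdBasisMatrix,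
        ← _root_.map_mul, ← _root_.map_mul, Matrix.single_mul_single_same,
        Matrix.single_mul_single_same]
    rw [h, mul_zero] at h2
    exact (CStarRing.star_mul_self_eq_zero_iff _).mp h2
  obtain ⟨w, hw⟩ : ∃ w, ρ (Matrix.single z q b) w ≠ 0 := by
    by_contra h
    push_neg at h
    exact hY (ContinuousLinearMap.ext h)
  exact ⟨_, ⟨q, b, w, rfl⟩, hw⟩

lemma rho_row_agree (R : Matrix (Fin n) (Fin n) A) (hR : ∀ p q, p ≠ z → R p q = 0) :
    ∀ x ∈ Lsub ρ z, ρ R x = ρ (Matrix.single z z (R z z)) x := by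
  apply eqOn_closure_span
  rintro x ⟨k, c, w, rfl⟩
  have h1 : R * Matrix.single z k c = Matrix.single z k (R z z * c) := row_mul_std z R hR k c
  have h2 : Matrix.single z z (R z z) * Matrix.single z k c = Matrix.single z k (R z z * c) := by
    rw [Matrix.single_mul_single_same]
  rw [← ContinuousLinearMap.mul_apply, ← _root_.map_mul, h1, ← h2, _root_.map_mul,
    ContinuousLinearMap.mul_apply]

lemma sigmaL_irred (hirr : ∀ ξ : K, ξ ≠ 0 → Dense (Set.range fun M => ρ M ξ)) :
    ∀ η : Lsub ρ z, η ≠ 0 → Dense (Set.range fun a => sigmaL ρ z a η) := by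
  intro η hη
  rw [dense_iff_closure_eq, Set.eq_univ_iff_forall]
  have hcoe : ((↑) '' (Set.range fun a => sigmaL ρ z a η) : Set K)
      = Set.range (fun a : A => ρ (Matrix.single z z a) (η : K)) := by
    ext x
    constructor
    · rintro ⟨_, ⟨a, rfl⟩, rfl⟩; exact ⟨a, rfl⟩
    · rintro ⟨a, rfl⟩; exact ⟨sigmaL ρ z a η, ⟨a, rfl⟩, rfl⟩
  set ℓ : A →ₗ[ℂ] K :=
    { toFun := fun a => ρ (Matrix.single z z a) (η : K)
      map_add' := fun a b => by
        simp only [Matrix.single_add, map_add, ContinuousLinearMap.add_apply]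
      map_smul' := fun c a => by
        simp [← Matrix.smul_single, _root_.map_smul] } with hℓ
  have hrange : Set.range (fun a : A => ρ (Matrix.single z z a) (η : K))
      = (LinearMap.range ℓ : Set K) := (LinearMap.coe_range ℓ).symm
  have hη0 : (η : K) ≠ 0 := fun h => hη (Submodule.coe_eq_zero.mp h)
  have hN : Lsub ρ z ≤ (LinearMap.range ℓ).topologicalClosure := by
    apply Submodule.topologicalClosure_minimal
    · rw [Submodule.span_le]
      rintro x ⟨k, c, w, rfl⟩
      have hw : w ∈ closure (Set.range fun M => ρ M (η : K)) := (hirr _ hη0) w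
      have himg : ρ (Matrix.single z k c) w ∈
          closure ((ρ (Matrix.single z k c)) '' (Set.range fun M => ρ M (η : K))) :=
        image_closure_subset_closure_image (ρ _).continuous ⟨w, hw, rfl⟩
      have hsub : (ρ (Matrix.single z k c)) '' (Set.range fun M => ρ M (η : K))
          ⊆ (LinearMap.range ℓ : Set K) := by
        rintro _ ⟨_, ⟨M, rfl⟩, rfl⟩
        refine ⟨c * M k z, ?_⟩
        have hrow : ∀ p q, p ≠ z → (Matrix.single z k c * M) p q = 0 := fun p q hp =>
          Matrix.single_mul_apply_of_ne c z k p q hp M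
        have hagree := rho_row_agree ρ z (Matrix.single z k c * M) hrow (η : K) η.2
        have hzz : (Matrix.single z k c * M) z z = c * M k z :=
          Matrix.single_mul_apply_same c z k z M
        show ρ (Matrix.single z z (c * M k z)) (η : K) = ρ (Matrix.single z k c) (ρ M (η : K))
        rw [← hzz, ← hagree, _root_.map_mul, ContinuousLinearMap.mul_apply]
      have : ρ (Matrix.single z k c) w ∈ closure (LinearMap.range ℓ : Set K) :=
        closure_mono hsub himg
      rw [← Submodule.topologicalClosure_coe] at this
      exact this
    · exact Submodule.isClosed_topologicalClosure _
  intro x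
  rw [closure_subtype, hcoe, hrange]
  have hmem := hN x.2
  rw [← Submodule.topologicalClosure_coe]
  exact hmem

/-- All matrix-unit vectors. -/
def Gset' : Set K := {x | ∃ j k c w, x = ρ (Matrix.single j k c) w}

include z in
lemma Lfull (hK : Nontrivial K)
    (hirr : ∀ ξ : K, ξ ≠ 0 → Dense (Set.range fun M => ρ M ξ)) :
    (Submodule.span ℂ (Gset' ρ)).topologicalClosure = ⊤ := by
  obtain ⟨x, hxG, hxne⟩ := exists_Gset_ne_zero ρ z hK hirr
  have hxG' : x ∈ Gset' ρ := by
    obtain ⟨k, c, w, rfl⟩ := hxG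
    exact ⟨z, k, c, w, rfl⟩
  set N := (Submodule.span ℂ (Gset' ρ)).topologicalClosure with hNdef
  have hxN : x ∈ N := (Submodule.le_topologicalClosure _) (Submodule.subset_span hxG')
  have hinv : ∀ M : Matrix (Fin n) (Fin n) A, ∀ y ∈ N, ρ M y ∈ N := by
    intro M
    apply mapsTo_closure_span
    rintro y ⟨j, k, c, w, rfl⟩
    rw [← ContinuousLinearMap.mul_apply, ← _root_.map_mul, mul_std_eq_sum M j k c,
      map_sum, ContinuousLinearMap.sum_apply]
    exact Submodule.sum_mem _ fun i _ => Submodule.subset_span ⟨i, k, M i j * c, w, rfl⟩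
  have hrange : Set.range (fun M => ρ M x) ⊆ (N : Set K) := by
    rintro _ ⟨M, rfl⟩
    exact hinv M x hxN
  have hdense : Dense (N : Set K) := (hirr x hxne).mono hrange
  have : (N : Set K) = Set.univ := by
    rw [← hdense.closure_eq, (Submodule.isClosed_topologicalClosure _).closure_eq]
  rw [Submodule.eq_top_iff']
  intro y
  show y ∈ (N : Set K)
  rw [this]
  trivial

lemma ker_expand (hK : Nontrivial K)
    (hirr : ∀ ξ : K, ξ ≠ 0 → Dense (Set.range fun M => ρ M ξ)) {a : A}
    (ha : ∀ x ∈ Lsub ρ z, ρ (Matrix.single z z a) x = 0) (j k : Fin n) :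
    ρ (Matrix.single j k a) = 0 := by
  have hrow : ∀ m : Fin n, ρ (Matrix.single z m a) = 0 := by
    intro m
    have hvanish : ∀ x ∈ Gset' ρ, ρ (Matrix.single z m a) x = 0 := by
      rintro x ⟨p, q, c, w, rfl⟩
      rw [← ContinuousLinearMap.mul_apply, ← _root_.map_mul]
      by_cases hpm : m = p
      · subst hpm
        rw [Matrix.single_mul_single_same]
        have h2 : Matrix.single z q (a * c) = Matrix.single z z a * Matrix.single z q c := by
          rw [Matrix.single_mul_single_same]
        rw [h2, _root_.map_mul, ContinuousLinearMap.mul_apply]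
        exact ha _ (Gset_subset_Lsub ρ z ⟨q, c, w, rfl⟩)
      · rw [Matrix.single_mul_single_of_ne a z m p hpm c, map_zero]
        rfl
    have hker : (Submodule.span ℂ (Gset' ρ)).topologicalClosure
        ≤ LinearMap.ker ((ρ (Matrix.single z m a) : K →L[ℂ] K) : K →ₗ[ℂ] K) :=
      Submodule.topologicalClosure_minimal _
        (Submodule.span_le.mpr fun x hx => hvanish x hx)
        (ContinuousLinearMap.isClosed_ker (ρ (Matrix.single z m a)))
    rw [Lfull ρ z hK hirr] at hker
    ext v
    exact hker (Submodule.mem_top (x := v))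
  have hx : star (ρ (Matrix.single j k a)) * ρ (Matrix.single j k a) = 0 := by
    rw [← map_star, star_stdBasisMatrix, ← _root_.map_mul, Matrix.single_mul_single_same]
    have h2 : Matrix.single k k (star a * a)
        = Matrix.single k z (star a) * Matrix.single z k a := by
      rw [Matrix.single_mul_single_same]
    rw [h2, _root_.map_mul, hrow k, mul_zero]
  exact (CStarRing.star_mul_self_eq_zero_iff _).mp hx

end Rep2

section MatRep

variable {H0 : Type} [NormedAddCommGroup H0] [InnerProductSpace ℂ H0] [CompleteSpace H0]
  (π : A →⋆ₙₐ[ℂ] (H0 →L[ℂ] H0)) (n : ℕ)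

/-- `π ⊗ 1` as a function into continuous linear maps. -/
noncomputable def matRepFun (M : Matrix (Fin n) (Fin n) A) :
    PiLp 2 (fun _ : Fin n => H0) →L[ℂ] PiLp 2 (fun _ : Fin n => H0) :=
  ((PiLp.continuousLinearEquiv 2 ℂ (fun _ : Fin n => H0)).symm.toContinuousLinearMap.comp
    ((ContinuousLinearMap.pi fun j => ∑ k, (π (M j k)).comp (ContinuousLinearMap.proj k)).comp
      (PiLp.continuousLinearEquiv 2 ℂ (fun _ : Fin n => H0)).toContinuousLinearMap))

lemma matRepFun_apply (M : Matrix (Fin n) (Fin n) A) (ξ : PiLp 2 (fun _ : Fin n => H0))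
    (j : Fin n) : matRepFun π n M ξ j = ∑ k, π (M j k) (ξ k) := by
  simp [matRepFun, ContinuousLinearMap.sum_apply]

lemma matRepFun_ext {x y : PiLp 2 (fun _ : Fin n => H0)} (h : ∀ j, x j = y j) : x = y :=
  PiLp.ext h

/-- `π ⊗ 1` as a star homomorphism. -/
noncomputable def matRep : Matrix (Fin n) (Fin n) A →⋆ₙₐ[ℂ]
    (PiLp 2 (fun _ : Fin n => H0) →L[ℂ] PiLp 2 (fun _ : Fin n => H0)) where
  toFun := matRepFun π n
  map_zero' := by
    ext ξ j
    simp [matRepFun_apply]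
  map_add' M N := by
    ext ξ j
    simp [matRepFun_apply, Matrix.add_apply, map_add, ContinuousLinearMap.add_apply,
      Finset.sum_add_distrib, PiLp.add_apply]
  map_smul' c M := by
    ext ξ j
    simp [matRepFun_apply, Matrix.smul_apply, _root_.map_smul, Finset.smul_sum,
      ContinuousLinearMap.smul_apply, PiLp.smul_apply]
  map_mul' M N := by
    ext ξ j
    rw [ContinuousLinearMap.mul_apply]
    rw [matRepFun_apply, matRepFun_apply]
    have : ∀ k, π ((M * N) j k) (ξ k) = ∑ l, π (M j l) (π (N l k) (ξ k)) := by
      intro k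
      rw [Matrix.mul_apply, map_sum, ContinuousLinearMap.sum_apply]
      exact Finset.sum_congr rfl fun l _ => by rw [_root_.map_mul, ContinuousLinearMap.mul_apply]
    rw [Finset.sum_congr rfl fun k _ => this k, Finset.sum_comm]
    refine Finset.sum_congr rfl fun l _ => ?_
    rw [matRepFun_apply, map_sum]
  map_star' M := by
    show matRepFun π n (star M) = star (matRepFun π n M)
    rw [ContinuousLinearMap.star_eq_adjoint, ContinuousLinearMap.eq_adjoint_iff]
    intro x y
    rw [PiLp.inner_apply, PiLp.inner_apply]
    have h1 : ∀ j, (inner ℂ (matRepFun π n (star M) x j) (y j) : ℂ)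
        = ∑ k, inner ℂ (x k) (π (M k j) (y j)) := by
      intro j
      rw [matRepFun_apply, sum_inner]
      refine Finset.sum_congr rfl fun k _ => ?_
      rw [Matrix.star_apply, map_star, ContinuousLinearMap.star_eq_adjoint,
        ContinuousLinearMap.adjoint_inner_left]
    have h2 : ∀ k, (inner ℂ (x k) (matRepFun π n M y k) : ℂ)
        = ∑ j, inner ℂ (x k) (π (M k j) (y j)) := by
      intro k
      rw [matRepFun_apply, inner_sum]
    rw [Finset.sum_congr rfl fun j _ => h1 j, Finset.sum_congr rfl fun k _ => h2 k,
      Finset.sum_comm]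

lemma matRep_apply (M : Matrix (Fin n) (Fin n) A) (ξ : PiLp 2 (fun _ : Fin n => H0))
    (j : Fin n) : matRep π n M ξ j = ∑ k, π (M j k) (ξ k) := matRepFun_apply π n M ξ j

lemma single_eq_matRep (j k₀ : Fin n) (a : A) (ξ : PiLp 2 (fun _ : Fin n => H0)) :
    (WithLp.toLp 2 (Pi.single j (π a (ξ k₀)) : ∀ _ : Fin n, H0) : PiLp 2 (fun _ : Fin n => H0))
      = matRep π n (Matrix.single j k₀ a) ξ := by
  ext m
  rw [matRep_apply, PiLp.toLp_apply]
  by_cases hm : j = m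
  · subst hm
    rw [Pi.single_eq_same, Finset.sum_eq_single k₀]
    · simp [Matrix.single_apply_same]
    · intro k _ hk
      have h0 : Matrix.single j k₀ a j k = 0 := by
        show (if j = j ∧ k₀ = k then a else 0) = 0
        rw [if_neg]
        rintro ⟨-, h⟩
        exact hk h.symm
      rw [h0, map_zero]
      rfl
    · simp
  · rw [Pi.single_eq_of_ne (fun h => hm h.symm)]
    symm
    apply Finset.sum_eq_zero
    intro k _
    have h0 : Matrix.single j k₀ a m k = 0 := by
      show (if j = m ∧ k₀ = k then a else 0) = 0
      rw [if_neg]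
      rintro ⟨h, -⟩
      exact hm h
    rw [h0, map_zero]
    rfl

lemma matRep_irred (hirr : ∀ ξ : H0, ξ ≠ 0 → Dense (Set.range fun a => π a ξ)) :
    ∀ ξ : PiLp 2 (fun _ : Fin n => H0), ξ ≠ 0 →
      Dense (Set.range fun M => matRep π n M ξ) := by
  intro ξ hξ
  obtain ⟨k₀, hk₀⟩ : ∃ k, ξ k ≠ 0 := by
    by_contra h
    push_neg at h
    exact hξ (PiLp.ext h)
  set ℓ : Matrix (Fin n) (Fin n) A →ₗ[ℂ] PiLp 2 (fun _ : Fin n => H0) :=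
    { toFun := fun M => matRep π n M ξ
      map_add' := fun M N => by simp only [map_add, ContinuousLinearMap.add_apply]
      map_smul' := fun c M => by
        simp only [_root_.map_smul, ContinuousLinearMap.smul_apply, RingHom.id_apply] }
    with hℓ
  have hrange : (Set.range fun M => matRep π n M ξ) = (LinearMap.range ℓ : Set _) :=
    (LinearMap.coe_range ℓ).symm
  rw [hrange]
  rw [Submodule.dense_iff_topologicalClosure_eq_top, Submodule.eq_top_iff']
  intro η
  have hsingle : ∀ (j : Fin n) (v : H0),
      (WithLp.toLp 2 (Pi.single j v : ∀ _ : Fin n, H0) : PiLp 2 (fun _ : Fin n => H0))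
        ∈ (LinearMap.range ℓ).topologicalClosure := by
    intro j v
    set g : H0 →L[ℂ] PiLp 2 (fun _ : Fin n => H0) :=
      (PiLp.continuousLinearEquiv 2 ℂ (fun _ : Fin n => H0)).symm.toContinuousLinearMap.comp
        { toLinearMap := LinearMap.single ℂ (fun _ : Fin n => H0) j
          cont := by
            exact continuous_single (A := fun _ : Fin n => H0) j } with hg
    have hvcl : v ∈ closure (Set.range fun a => π a (ξ k₀)) := (hirr _ hk₀) v
    have himg : g v ∈ closure (g '' (Set.range fun a => π a (ξ k₀))) :=
      image_closure_subset_closure_image g.continuous ⟨v, hvcl, rfl⟩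
    have hsub : g '' (Set.range fun a => π a (ξ k₀)) ⊆ (LinearMap.range ℓ : Set _) := by
      rintro _ ⟨_, ⟨a, rfl⟩, rfl⟩
      refine ⟨Matrix.single j k₀ a, ?_⟩
      show matRep π n (Matrix.single j k₀ a) ξ = g (π a (ξ k₀))
      rw [← single_eq_matRep]
      rfl
    have := closure_mono hsub himg
    rw [← Submodule.topologicalClosure_coe] at this
    exact this
  have hdecomp : η = ∑ j, (WithLp.toLp 2 (Pi.single j (η j) : ∀ _ : Fin n, H0)
      : PiLp 2 (fun _ : Fin n => H0)) := by
    ext m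
    simp only [WithLp.ofLp_sum, WithLp.ofLp_toLp, Finset.sum_apply]
    rw [Finset.sum_eq_single m]
    · rw [Pi.single_eq_same]
    · intro j _ hj
      exact Pi.single_eq_of_ne (fun h => hj h.symm) _
    · simp
  rw [hdecomp]
  exact Submodule.sum_mem _ fun j _ => hsingle j (η j)

end MatRep

/-- Extract entrywise vanishing from vanishing of the amplified representation. -/
lemma entry_zero {Hs : Type} [NormedAddCommGroup Hs] [InnerProductSpace ℂ Hs]
    [CompleteSpace Hs] {n : ℕ} (φi : A →⋆ₙₐ[ℂ] (Hs →L[ℂ] Hs))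
    (Φi : Matrix (Fin n) (Fin n) A →⋆ₙₐ[ℂ]
      (PiLp 2 (fun _ : Fin n => Hs) →L[ℂ] PiLp 2 (fun _ : Fin n => Hs)))
    (hΦi : ∀ M ξ (j : Fin n), Φi M ξ j = ∑ k, φi (M j k) (ξ k))
    {M : Matrix (Fin n) (Fin n) A} (hM : Φi M = 0) (j k : Fin n) : φi (M j k) = 0 := by
  ext v
  have h := hΦi M (WithLp.toLp 2 (Pi.single k v : ∀ _ : Fin n, Hs) : PiLp 2 (fun _ : Fin n => Hs)) j
  rw [hM] at h
  rw [Finset.sum_eq_single k] at h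
  · rw [show (WithLp.toLp 2 (Pi.single k v : ∀ _ : Fin n, Hs) : PiLp 2 (fun _ : Fin n => Hs)) k = v
      from by simp] at h
    rw [show (((0 : PiLp 2 (fun _ : Fin n => Hs) →L[ℂ] PiLp 2 (fun _ : Fin n => Hs))
        (WithLp.toLp 2 (Pi.single k v : ∀ _ : Fin n, Hs) : PiLp 2 (fun _ : Fin n => Hs))) j : Hs) = 0
      from rfl] at h
    rw [← h]
    rfl
  · intro b _ hb
    rw [show (WithLp.toLp 2 (Pi.single k v : ∀ _ : Fin n, Hs) : PiLp 2 (fun _ : Fin n => Hs)) b = 0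
      from by simp [hb], map_zero]
  · simp

end ExhAux

/-- A family `F` of representations of a C*-algebra `A` is exhaustive for `A` iff the
family `F_n = {φ ⊗ 1}` of representations of `M_n(A)` (acting entrywise on `H^n`) is
exhaustive for `M_n(A)`. -/
theorem exhaustive_iff_matrices
    (A : Type) [NonUnitalCStarAlgebra A] (n : ℕ) (hn : 0 < n)
    {ι : Type} (H : ι → Type)
    [∀ i, NormedAddCommGroup (H i)] [∀ i, InnerProductSpace ℂ (H i)]
    [∀ i, CompleteSpace (H i)]
    (φ : ∀ i, A →⋆ₙₐ[ℂ] (H i →L[ℂ] H i))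
    -- `Φ i = φ i ⊗ 1`, acting entrywise on `H i ⊗ ℂⁿ ≅ (H i)ⁿ`
    (Φ : ∀ i, Matrix (Fin n) (Fin n) A →⋆ₙₐ[ℂ]
      (PiLp 2 (fun _ : Fin n => H i) →L[ℂ] PiLp 2 (fun _ : Fin n => H i)))
    (hΦ : ∀ i (M : Matrix (Fin n) (Fin n) A) (ξ : PiLp 2 (fun _ : Fin n => H i)) (j : Fin n),
      (Φ i M) ξ j = ∑ k : Fin n, φ i (M j k) (ξ k)) :
    (∀ P : Set A, IsPrimitiveIdeal A P → ∃ i, {a : A | φ i a = 0} ⊆ P) ↔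
    (∀ P : Set (Matrix (Fin n) (Fin n) A), IsPrimitiveIdeal (Matrix (Fin n) (Fin n) A) P →
      ∃ i, {M : Matrix (Fin n) (Fin n) A | Φ i M = 0} ⊆ P) := by
  constructor
  · -- A-exhaustive implies matrix-exhaustive
    intro hA P hP
    obtain ⟨K, i1, i2, i3, ρ, hKnt, hirr, hPeq⟩ := hP
    letI := i1; letI := i2; letI := i3
    set z : Fin n := ⟨0, hn⟩ with hz
    -- the associated primitive ideal of A
    have hLnt : Nontrivial (ExhAux.Lsub ρ z) := by
      obtain ⟨x, hxG, hxne⟩ := ExhAux.exists_Gset_ne_zero ρ z hKnt hirr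
      refine ⟨⟨x, ExhAux.Gset_subset_Lsub ρ z hxG⟩, 0, fun h => hxne ?_⟩
      exact Submodule.coe_eq_zero.mpr h ▸ rfl
    have hprim : IsPrimitiveIdeal A {a : A | ExhAux.sigmaL ρ z a = 0} :=
      ⟨ExhAux.Lsub ρ z, inferInstance, inferInstance, inferInstance, ExhAux.sigmaL ρ z,
        hLnt, ExhAux.sigmaL_irred ρ z hirr, rfl⟩
    obtain ⟨i, hi⟩ := hA _ hprim
    refine ⟨i, fun M hM => ?_⟩
    rw [hPeq]
    show ρ M = 0
    have hent : ∀ j k, φ i (M j k) = 0 := ExhAux.entry_zero (φ i) (Φ i) (hΦ i) hM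
    have hzero : ∀ j k, ρ (Matrix.single j k (M j k)) = 0 := by
      intro j k
      apply ExhAux.ker_expand ρ z hKnt hirr (a := M j k) ?_ j k
      intro x hx
      have hσ : ExhAux.sigmaL ρ z (M j k) = 0 := hi (hent j k)
      calc ρ (Matrix.single z z (M j k)) x
          = ((ExhAux.sigmaL ρ z (M j k)) ⟨x, hx⟩ : K) := rfl
        _ = (((0 : ExhAux.Lsub ρ z →L[ℂ] ExhAux.Lsub ρ z)) ⟨x, hx⟩ : K) := by rw [hσ]
        _ = 0 := rfl
    calc ρ M = ∑ p, ∑ q, ρ (Matrix.single p q (M p q)) := by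
          nth_rewrite 1 [Matrix.matrix_eq_sum_single M]
          rw [map_sum]
          exact Finset.sum_congr rfl fun p _ => map_sum ρ _ _
      _ = 0 := Finset.sum_eq_zero fun p _ => Finset.sum_eq_zero fun q _ => hzero p q
  · -- matrix-exhaustive implies A-exhaustive
    intro hMn P hP
    obtain ⟨H0, i1, i2, i3, π, hnt, hirr, hPeq⟩ := hP
    letI := i1; letI := i2; letI := i3
    set z : Fin n := ⟨0, hn⟩ with hz
    set ρ := ExhAux.matRep π n with hρ
    have hPiNt : Nontrivial (PiLp 2 (fun _ : Fin n => H0)) := by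
      obtain ⟨v, hv⟩ := exists_ne (0 : H0)
      refine ⟨(WithLp.toLp 2 (Pi.single z v : ∀ _ : Fin n, H0) : PiLp 2 (fun _ : Fin n => H0)), 0, fun h => hv ?_⟩
      have := congrFun (congrArg WithLp.ofLp h) z
      rwa [WithLp.ofLp_toLp, Pi.single_eq_same, WithLp.ofLp_zero, Pi.zero_apply] at this
    have hQ : IsPrimitiveIdeal (Matrix (Fin n) (Fin n) A) {M | ρ M = 0} :=
      ⟨PiLp 2 (fun _ : Fin n => H0), inferInstance, inferInstance, inferInstance, ρ,
        hPiNt, ExhAux.matRep_irred π n hirr, rfl⟩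
    obtain ⟨i, hi⟩ := hMn _ hQ
    refine ⟨i, fun a ha => ?_⟩
    rw [hPeq]
    show π a = 0
    have hM0 : Φ i (Matrix.single z z a) = 0 := by
      ext ξ j
      rw [hΦ]
      have h0 : ∀ k, φ i (Matrix.single z z a j k) (ξ k) = 0 := by
        intro k
        by_cases hjz : z = j ∧ z = k
        · have : Matrix.single z z a j k = a := by
            show (if z = j ∧ z = k then a else 0) = a
            rw [if_pos hjz]
          rw [this, ha]
          rfl
        · have : Matrix.single z z a j k = 0 := by
            show (if z = j ∧ z = k then a else 0) = 0
            rw [if_neg hjz]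
          rw [this, map_zero]
          rfl
      rw [Finset.sum_congr rfl fun k _ => h0 k]
      simp
    have hmem : ρ (Matrix.single z z a) = 0 := hi hM0
    ext v
    have h1 : ρ (Matrix.single z z a)
        (WithLp.toLp 2 (Pi.single z v : ∀ _ : Fin n, H0) : PiLp 2 (fun _ : Fin n => H0)) z = π a v := by
      rw [hρ, ExhAux.matRep_apply]
      rw [Finset.sum_eq_single z]
      · have : Matrix.single z z a z z = a := by
          show (if z = z ∧ z = z then a else 0) = a
          rw [if_pos ⟨rfl, rfl⟩]
        rw [this, PiLp.toLp_apply, Pi.single_eq_same]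
      · intro k _ hk
        rw [PiLp.toLp_apply, Pi.single_eq_of_ne hk, map_zero]
      · simp
    rw [hmem] at h1
    rw [← h1]
    rfl
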